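/- Let G = ⟨x₁, x₂, z, h | [x₁,h] = [x₂,h] = 1, x₁x₂z² = 1, zhz⁻¹h = 1⟩. For any θ₁ ∈ ℝ and ψ₁ ∉ πℤ, there exists an irreducible representation ρ : G → SU(2) with ρ(x₁) = diag(e^{iθ₁}, e^{-iθ₁}), ρ(h) = diag(e^{iψ₁}, e^{-iψ₁}), and ρ(x₂) = diag(e^{i(π-θ₁)}, e^{-i(π-θ₁)}). -/

import Mathlib

/-- `SU(2)`: the group of 2×2 complex unitary matrices of determinant 1. -/
noncomputable def SU2 : Subgroup ↥(Matrix.unitaryGroup (Fin 2) ℂ) :=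
  MonoidHom.ker (Matrix.detMonoidHom.comp (Matrix.unitaryGroup (Fin 2) ℂ).subtype)

/-- The underlying matrix of an element of `SU(2)`. -/
def SU2.mat (A : SU2) : Matrix (Fin 2) (Fin 2) ℂ := A.val.val

/-- The diagonal matrix `diag(e^{iθ}, e^{-iθ})`. -/
noncomputable def diagU (θ : ℝ) : Matrix (Fin 2) (Fin 2) ℂ :=
  !![Complex.exp (θ * Complex.I), 0; 0, Complex.exp (-(θ * Complex.I))]

/-- Relations of `π₁(C₂) = ⟨x₁,x₂,z,h | [x₁,h], [x₂,h], x₁x₂z², zhz⁻¹h⟩`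
(generators `0,1,2,3` standing for `x₁,x₂,z,h`). -/
def C2rels : Set (FreeGroup (Fin 4)) :=
  { FreeGroup.of 0 * FreeGroup.of 3 * (FreeGroup.of 0)⁻¹ * (FreeGroup.of 3)⁻¹,
    FreeGroup.of 1 * FreeGroup.of 3 * (FreeGroup.of 1)⁻¹ * (FreeGroup.of 3)⁻¹,
    FreeGroup.of 0 * FreeGroup.of 1 * (FreeGroup.of 2) ^ 2,
    FreeGroup.of 2 * FreeGroup.of 3 * (FreeGroup.of 2)⁻¹ * FreeGroup.of 3 }

/-- The fundamental group of `C₂`, the twisted I-bundle over a once-punctured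
Möbius band. -/
def C2 := PresentedGroup C2rels

instance : Group C2 := by unfold C2; infer_instance

def c2x₁ : C2 := PresentedGroup.of 0
def c2x₂ : C2 := PresentedGroup.of 1
def c2z : C2 := PresentedGroup.of 2
def c2h : C2 := PresentedGroup.of 3

namespace SU2aux

lemma star_fin_two (a b c d : ℂ) :
    star !![a, b; c, d] = !![star a, star c; star b, star d] := by
  ext i j; fin_cases i <;> fin_cases j <;> simp [Matrix.conjTranspose_apply]

lemma star_diagU (θ : ℝ) : star (diagU θ) = diagU (-θ) := by
  simp [diagU, star_fin_two, ← Complex.exp_conj]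

lemma diagU_mul (θ θ' : ℝ) : diagU θ * diagU θ' = diagU (θ + θ') := by
  simp [diagU, Matrix.mul_fin_two, ← Complex.exp_add]
  ring_nf
  exact ⟨trivial, trivial⟩

lemma diagU_zero : diagU 0 = 1 := by
  simp [diagU]; exact (Matrix.eta_fin_two 1).symm |>.trans (by norm_num)

lemma mem_SU2 {A : Matrix (Fin 2) (Fin 2) ℂ} (h1 : A * star A = 1)
    (h2 : A.det = 1) : (⟨A, Matrix.mem_unitaryGroup_iff.mpr h1⟩ :
      Matrix.unitaryGroup (Fin 2) ℂ) ∈ SU2 := by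
  simp [SU2, MonoidHom.mem_ker, h2]

/-- The element `diag(e^{iθ}, e^{-iθ})` as an element of `SU2`. -/
noncomputable def D (θ : ℝ) : SU2 :=
  ⟨_, mem_SU2 (A := diagU θ)
    (by rw [star_diagU, diagU_mul, add_neg_cancel, diagU_zero])
    (by simp [diagU, Matrix.det_fin_two_of, ← Complex.exp_add])⟩

lemma D_mat (θ : ℝ) : (D θ).val.val = diagU θ := rfl

/-- The matrix `[[0,1],[-1,0]]` as an element of `SU2`. -/
noncomputable def Z : SU2 :=
  ⟨_, mem_SU2 (A := !![0, 1; -1, 0])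
    (by rw [star_fin_two]; simp [Matrix.mul_fin_two]
        exact (Matrix.eta_fin_two 1).symm |>.trans (by norm_num))
    (by simp [Matrix.det_fin_two_of])⟩

lemma Z_mat : Z.val.val = !![0, 1; -1, 0] := rfl

lemma ext' {A B : SU2} (h : A.val.val = B.val.val) : A = B :=
  Subtype.ext (Subtype.ext h)

lemma D_mul (θ θ' : ℝ) : D θ * D θ' = D (θ + θ') :=
  ext' (by show diagU θ * diagU θ' = diagU (θ + θ'); rw [diagU_mul])

lemma D_zero : D 0 = 1 :=
  ext' (by show diagU 0 = _; rw [diagU_zero]; rfl)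

lemma D_inv (θ : ℝ) : (D θ)⁻¹ = D (-θ) := by
  rw [inv_eq_iff_mul_eq_one, D_mul, add_neg_cancel, D_zero]

lemma ZDZ (θ : ℝ) : Z * D θ * Z⁻¹ = D (-θ) := by
  rw [eq_comm, eq_mul_inv_iff_mul_eq]
  refine ext' ?_
  show diagU (-θ) * !![0, 1; -1, 0] = !![0, 1; -1, 0] * diagU θ
  simp [diagU, Matrix.mul_fin_two]

lemma DpiZ2 : D Real.pi * Z ^ 2 = 1 := by
  rw [pow_two]
  refine ext' ?_
  show diagU Real.pi * (!![0, 1; -1, 0] * !![0, 1; -1, 0]) = (1 : SU2).val.val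
  rw [show ((1 : SU2).val.val) = (1 : Matrix (Fin 2) (Fin 2) ℂ) from rfl]
  simp [diagU, Matrix.mul_fin_two, Complex.exp_neg, Complex.exp_pi_mul_I]
  norm_num
  exact (Matrix.eta_fin_two 1).symm |>.trans (by norm_num)

end SU2aux

/-- For any `θ₁ ∈ ℝ` and `ψ₁ ∉ πℤ`, there exists an irreducible representation
`ρ : π₁(C₂) → SU(2)` with `ρ(x₁) = diag(e^{iθ₁}, e^{-iθ₁})`,
`ρ(h) = diag(e^{iψ₁}, e^{-iψ₁})` and `ρ(x₂) = diag(e^{i(π-θ₁)}, e^{-i(π-θ₁)})`. -/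
theorem exists_irreducible_rep_C2 (θ₁ ψ₁ : ℝ) (hψ : ∀ n : ℤ, ψ₁ ≠ n * Real.pi) :
    ∃ ρ : C2 →* SU2, (¬ ∀ g g' : C2, Commute (ρ g) (ρ g')) ∧
      SU2.mat (ρ c2x₁) = diagU θ₁ ∧ SU2.mat (ρ c2h) = diagU ψ₁ ∧
      SU2.mat (ρ c2x₂) = diagU (Real.pi - θ₁) := by
  classical
  set f : Fin 4 → SU2 := ![SU2aux.D θ₁, SU2aux.D (Real.pi - θ₁), SU2aux.Z, SU2aux.D ψ₁]
    with hf
  have hcomm : ∀ θ θ' : ℝ, SU2aux.D θ * SU2aux.D θ' * (SU2aux.D θ)⁻¹ * (SU2aux.D θ')⁻¹ = 1 := by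
    intro θ θ'
    rw [SU2aux.D_mul, SU2aux.D_inv, SU2aux.D_inv, SU2aux.D_mul, SU2aux.D_mul]
    rw [show θ + θ' + -θ + -θ' = 0 by ring, SU2aux.D_zero]
  have hrels : ∀ r ∈ C2rels, FreeGroup.lift f r = 1 := by
    intro r hr
    rcases hr with h | h | h | h
    · subst h; simp only [map_mul, map_inv, FreeGroup.lift_apply_of, hf]
      simpa using hcomm θ₁ ψ₁
    · subst h; simp only [map_mul, map_inv, FreeGroup.lift_apply_of, hf]
      simpa using hcomm (Real.pi - θ₁) ψ₁
    · subst h; simp only [map_mul, map_pow, FreeGroup.lift_apply_of, hf]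
      show SU2aux.D θ₁ * SU2aux.D (Real.pi - θ₁) * SU2aux.Z ^ 2 = 1
      rw [SU2aux.D_mul, show θ₁ + (Real.pi - θ₁) = Real.pi by ring, SU2aux.DpiZ2]
    · subst h; simp only [map_mul, map_inv, FreeGroup.lift_apply_of, hf]
      show SU2aux.Z * SU2aux.D ψ₁ * SU2aux.Z⁻¹ * SU2aux.D ψ₁ = 1
      rw [SU2aux.ZDZ, SU2aux.D_mul, neg_add_cancel, SU2aux.D_zero]
  refine ⟨PresentedGroup.toGroup hrels, ?_, ?_, ?_, ?_⟩
  · intro hc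
    have h1 := hc c2z c2h
    rw [Commute, SemiconjBy] at h1
    have e2 : (PresentedGroup.toGroup hrels) (PresentedGroup.of (2 : Fin 4)) = SU2aux.Z :=
      (PresentedGroup.toGroup.of hrels).trans (by simp [hf])
    have e3 : (PresentedGroup.toGroup hrels) (PresentedGroup.of (3 : Fin 4)) = SU2aux.D ψ₁ :=
      (PresentedGroup.toGroup.of hrels).trans (by simp [hf])
    have h2 : SU2aux.Z * SU2aux.D ψ₁ = SU2aux.D ψ₁ * SU2aux.Z := by
      rw [← e2, ← e3]; exact h1
    have h3 : ((!![0, 1; -1, 0] : Matrix (Fin 2) (Fin 2) ℂ) * diagU ψ₁) 0 1 = (diagU ψ₁ * (!![0, 1; -1, 0] : Matrix (Fin 2) (Fin 2) ℂ)) 0 1 :=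
      congrArg (fun A : SU2 => A.val.val 0 1) h2
    have h4 : Complex.exp (-(ψ₁ * Complex.I)) = Complex.exp (ψ₁ * Complex.I) := by
      rw [diagU, Matrix.mul_fin_two, Matrix.mul_fin_two] at h3
      simpa using h3
    rw [Complex.exp_eq_exp_iff_exists_int] at h4
    obtain ⟨n, hn⟩ := h4
    have him := congrArg Complex.im hn
    simp [Complex.mul_im] at him
    exact hψ (-n) (by push_cast; linarith)
  · show SU2.mat ((PresentedGroup.toGroup hrels) (PresentedGroup.of (0 : Fin 4))) = diagU θ₁
    rw [PresentedGroup.toGroup.of]; simp [hf, SU2.mat, SU2aux.D_mat]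
  · show SU2.mat ((PresentedGroup.toGroup hrels) (PresentedGroup.of (3 : Fin 4))) = diagU ψ₁
    rw [PresentedGroup.toGroup.of]; simp [hf, SU2.mat, SU2aux.D_mat]
  · show SU2.mat ((PresentedGroup.toGroup hrels) (PresentedGroup.of (1 : Fin 4))) =
      diagU (Real.pi - θ₁)
    rw [PresentedGroup.toGroup.of]; simp [hf, SU2.mat, SU2aux.D_mat]
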